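/- arXiv:0808.3418 — 7 statements merged into one kernel-verified Lean document; each statement's English description precedes it below -/
import Mathlib

section
/- For positive reals h_j,...,h_{M-1} and μ ≥ 0, the function μ ↦ (Σ_{m=j}^{M-1} h_m²/(1+μh_m)²) / (Σ_{m=j}^{M-1} h_m/(1+μh_m)) is non-increasing on [0,∞). -/
lemma key0 (a b t : ℝ) (ha : 0 < a) (hb : 0 < b) (ht : 0 ≤ t) :
    (a/(1+t*a))^2 * b + (b/(1+t*b))^2 * a ≤ a^2 * (b/(1+t*b)) + b^2 * (a/(1+t*a)) := by
  have hA : 0 < 1 + t*a := by positivity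
  have hB : 0 < 1 + t*b := by positivity
  have hid : a^2 * (b/(1+t*b)) + b^2 * (a/(1+t*a)) - ((a/(1+t*a))^2 * b + (b/(1+t*b))^2 * a)
      = a*b*(2*t*(a^2+b^2-a*b) + t^2*((a^3+b^3)+a*b*(a+b)) + t^3*(a*b*(a^2+b^2)))
        / ((1+t*a)^2*(1+t*b)^2) := by
    field_simp
    ring
  have hnum : 0 ≤ a*b*(2*t*(a^2+b^2-a*b) + t^2*((a^3+b^3)+a*b*(a+b)) + t^3*(a*b*(a^2+b^2))) := by
    have h1 : 0 ≤ a^2+b^2-a*b := by nlinarith [sq_nonneg (a-b)]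
    have := ha.le; have := hb.le
    positivity
  have : 0 ≤ a^2 * (b/(1+t*b)) + b^2 * (a/(1+t*a)) - ((a/(1+t*a))^2 * b + (b/(1+t*b))^2 * a) := by
    rw [hid]; positivity
  linarith

lemma key (x y μ ν : ℝ) (hx : 0 < x) (hy : 0 < y) (hμ : 0 ≤ μ) (hμν : μ ≤ ν) :
    (x/(1+ν*x))^2 * (y/(1+μ*y)) + (y/(1+ν*y))^2 * (x/(1+μ*x)) ≤
    (x/(1+μ*x))^2 * (y/(1+ν*y)) + (y/(1+μ*y))^2 * (x/(1+ν*x)) := by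
  have hν : 0 ≤ ν := hμ.trans hμν
  have hA : 0 < 1 + μ*x := by positivity
  have hB : 0 < 1 + μ*y := by positivity
  have hC : 0 < 1 + ν*x := by positivity
  have hD : 0 < 1 + ν*y := by positivity
  set a := x/(1+μ*x) with hadef
  set b := y/(1+μ*y) with hbdef
  have ha : 0 < a := by positivity
  have hb : 0 < b := by positivity
  have ht : 0 ≤ ν - μ := sub_nonneg.2 hμν
  have hex : x/(1+ν*x) = a/(1+(ν-μ)*a) := by
    rw [hadef]; field_simp; ring_nf
  have hey : y/(1+ν*y) = b/(1+(ν-μ)*b) := by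
    rw [hbdef]; field_simp; ring_nf
  rw [hex, hey]
  exact key0 a b (ν-μ) ha hb ht

theorem stmt_1 (j M : ℕ) (hjM : j < M) (h : ℕ → ℝ)
    (hpos : ∀ m ∈ Finset.Ico j M, 0 < h m) :
    AntitoneOn
      (fun μ : ℝ =>
        (∑ m ∈ Finset.Ico j M, (h m) ^ 2 / (1 + μ * h m) ^ 2) /
          (∑ m ∈ Finset.Ico j M, h m / (1 + μ * h m)))
      (Set.Ici (0 : ℝ)) := by
  intro μ hμ ν hν hμν
  simp only [Set.mem_Ici] at hμ hν
  set s := Finset.Ico j M with hs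
  have hne : s.Nonempty := ⟨j, Finset.mem_Ico.2 ⟨le_refl j, hjM⟩⟩
  have hpos' : ∀ m ∈ s, 0 < h m := hpos
  have hd : ∀ κ : ℝ, 0 ≤ κ → ∀ m ∈ s, 0 < 1 + κ * h m := by
    intro κ hκ m hm
    have := hpos' m hm
    positivity
  have hS1 : ∀ κ : ℝ, 0 ≤ κ → 0 < ∑ m ∈ s, h m / (1 + κ * h m) := by
    intro κ hκ
    refine Finset.sum_pos (fun m hm => ?_) hne
    exact div_pos (hpos' m hm) (hd κ hκ m hm)
  have hsq : ∀ κ : ℝ, (∑ m ∈ s, (h m) ^ 2 / (1 + κ * h m) ^ 2)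
      = ∑ m ∈ s, (h m / (1 + κ * h m)) ^ 2 := by
    intro κ
    exact Finset.sum_congr rfl (fun m _ => (div_pow _ _ 2).symm)
  simp only [hsq]
  rw [div_le_div_iff₀ (hS1 ν (hμ.trans hμν)) (hS1 μ hμ)]
  rw [Finset.sum_mul_sum, Finset.sum_mul_sum]
  have hmain : ∀ m ∈ s, ∀ k ∈ s,
      (h m / (1 + ν * h m)) ^ 2 * (h k / (1 + μ * h k)) +
      (h k / (1 + ν * h k)) ^ 2 * (h m / (1 + μ * h m)) ≤
      (h m / (1 + μ * h m)) ^ 2 * (h k / (1 + ν * h k)) +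
      (h k / (1 + μ * h k)) ^ 2 * (h m / (1 + ν * h m)) :=
    fun m hm k hk => key (h m) (h k) μ ν (hpos' m hm) (hpos' k hk) hμ hμν
  have h2 : ∀ F : ℕ → ℕ → ℝ,
      2 * (∑ m ∈ s, ∑ k ∈ s, F m k) = ∑ m ∈ s, ∑ k ∈ s, (F m k + F k m) := by
    intro F
    have hc : ∑ m ∈ s, ∑ k ∈ s, F k m = ∑ m ∈ s, ∑ k ∈ s, F m k :=
      Finset.sum_comm (s := s) (t := s) (f := fun m k => F k m)
    rw [two_mul]
    simp only [Finset.sum_add_distrib]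
    rw [hc]
  have hle : 2 * (∑ m ∈ s, ∑ k ∈ s, (h m / (1 + ν * h m)) ^ 2 * (h k / (1 + μ * h k)))
      ≤ 2 * (∑ m ∈ s, ∑ k ∈ s, (h m / (1 + μ * h m)) ^ 2 * (h k / (1 + ν * h k))) := by
    rw [h2, h2]
    refine Finset.sum_le_sum (fun m hm => Finset.sum_le_sum (fun k hk => ?_))
    exact hmain m hm k hk
  linarith
end

section
/- For c > 1, h_0, h_1 > 0 with h_0 ≤ h_1, the function P_M(r) = (2√(cr) − r − 1)/(h_0 r + h_1) defined on [1, c] attains its unique maximum at r_opt = ((√((h_1−h_0)² + 4h_0h_1c) − (h_1−h_0))/(2h_0√c))², and 1 ≤ r_opt ≤ c; moreover P_M is strictly increasing on [1, r_opt) and strictly decreasing on (r_opt, c]. -/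
set_option maxHeartbeats 1000000 in
theorem stmt_4 (c h0 h1 : ℝ) (hc : 1 < c) (hh0 : 0 < h0) (hh1 : 0 < h1) (hle : h0 ≤ h1)
    (PM : ℝ → ℝ) (hPM : ∀ r, PM r = (2 * Real.sqrt (c * r) - r - 1) / (h0 * r + h1))
    (ropt : ℝ)
    (hropt : ropt =
      ((Real.sqrt ((h1 - h0) ^ 2 + 4 * h0 * h1 * c) - (h1 - h0)) /
          (2 * h0 * Real.sqrt c)) ^ 2) :
    1 ≤ ropt ∧ ropt ≤ c ∧
      (∀ r ∈ Set.Icc (1 : ℝ) c, PM r ≤ PM ropt) ∧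
      (∀ r ∈ Set.Icc (1 : ℝ) c, PM r = PM ropt → r = ropt) ∧
      StrictMonoOn PM (Set.Ico 1 ropt) ∧
      StrictAntiOn PM (Set.Ioc ropt c) := by
  have hPM' : PM = fun r => (2 * Real.sqrt (c * r) - r - 1) / (h0 * r + h1) := funext hPM
  subst hPM'
  have hc0 : (0:ℝ) < c := by linarith
  set s := Real.sqrt c with hs_def
  have hs0 : 0 < s := Real.sqrt_pos.mpr hc0
  have hs2 : s ^ 2 = c := Real.sq_sqrt hc0.le
  have hs1 : 1 < s := by
    rw [hs_def, show (1:ℝ) = Real.sqrt 1 by simp]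
    exact Real.sqrt_lt_sqrt (by norm_num) hc
  have h0s : 0 < h0 * s := mul_pos hh0 hs0
  have hprod : 0 < h0 * h1 * c := mul_pos (mul_pos hh0 hh1) hc0
  set D := Real.sqrt ((h1 - h0) ^ 2 + 4 * h0 * h1 * c) with hD_def
  have hD0 : 0 ≤ D := Real.sqrt_nonneg _
  have hD2 : D ^ 2 = (h1 - h0) ^ 2 + 4 * h0 * h1 * c :=
    Real.sq_sqrt (by nlinarith [sq_nonneg (h1 - h0)])
  have habs : |h1 - h0| < D := by
    rw [hD_def, ← Real.sqrt_sq_eq_abs]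
    exact Real.sqrt_lt_sqrt (sq_nonneg _) (by linarith)
  have hDB : h1 - h0 < D := lt_of_le_of_lt (le_abs_self _) habs
  have hDB' : -(h1 - h0) < D := lt_of_le_of_lt (neg_le_abs _) habs
  set sstar := (D - (h1 - h0)) / (2 * h0 * s) with hsstar_def
  have hne2 : (2 * h0 * s) ≠ 0 := ne_of_gt (by linarith)
  have hsstar0 : 0 < sstar := div_pos (by linarith) (by linarith)
  have hu : (D - (h1 - h0)) ^ 2 + 2 * (h1 - h0) * (D - (h1 - h0)) = 4 * h0 * h1 * s ^ 2 := by
    linear_combination hD2 - 4 * h0 * h1 * hs2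
  have haux : h0 * s * sstar ^ 2 + (h1 - h0) * sstar
      = ((D - (h1 - h0)) ^ 2 + 2 * (h1 - h0) * (D - (h1 - h0))) / (4 * h0 * s) := by
    rw [hsstar_def]; field_simp; ring
  have hroot : h0 * s * sstar ^ 2 + (h1 - h0) * sstar = h1 * s := by
    rw [haux, hu, div_eq_iff (ne_of_gt (by linarith : (0:ℝ) < 4 * h0 * s))]
    ring
  have hQ : ∀ t : ℝ, h0 * s * t ^ 2 + (h1 - h0) * t - h1 * s
      = (t - sstar) * (h0 * s * (t + sstar) + (h1 - h0)) := by
    intro t; linear_combination hroot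
  have hAs : h0 * s * sstar = (D - (h1 - h0)) / 2 := by
    rw [hsstar_def]; field_simp
  have hfacpos : ∀ t : ℝ, 0 ≤ t → 0 < h0 * s * (t + sstar) + (h1 - h0) := by
    intro t ht
    have h1' : 0 ≤ h0 * s * t := mul_nonneg h0s.le ht
    nlinarith [hAs]
  have hsstar1 : 1 ≤ sstar := by
    have hq1 := hQ 1
    have hp := hfacpos 1 zero_le_one
    have hkey : h0 * s * 1 ^ 2 + (h1 - h0) * 1 - h1 * s ≤ 0 := by
      nlinarith [mul_nonneg (sub_nonneg.2 hle) (show (0:ℝ) ≤ s - 1 by linarith)]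
    nlinarith
  have hsstars : sstar < s := by
    have hqs := hQ s
    have hp := hfacpos s hs0.le
    have hkey : 0 < h0 * s * s ^ 2 + (h1 - h0) * s - h1 * s := by
      nlinarith [mul_pos h0s (show (0:ℝ) < s ^ 2 - 1 by nlinarith)]
    nlinarith
  have h1ropt : 1 ≤ ropt := by rw [hropt]; nlinarith
  have hroptc : ropt < c := by
    rw [hropt, ← hs2]
    exact pow_lt_pow_left₀ hsstars hsstar0.le (by norm_num)
  -- derivative
  have hderiv : ∀ x : ℝ, 0 < x →
      HasDerivAt (fun r => (2 * Real.sqrt (c * r) - r - 1) / (h0 * r + h1))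
        (((2 * (c / (2 * Real.sqrt (c * x))) - 1) * (h0 * x + h1)
          - (2 * Real.sqrt (c * x) - x - 1) * h0) / (h0 * x + h1) ^ 2) x := by
    intro x hx
    have hcx : c * x ≠ 0 := ne_of_gt (mul_pos hc0 hx)
    have hnum : HasDerivAt (fun r => 2 * Real.sqrt (c * r) - r - 1)
        (2 * (c / (2 * Real.sqrt (c * x))) - 1) x := by
      have h1' : HasDerivAt (fun r : ℝ => c * r) c x := by
        simpa using (hasDerivAt_id x).const_mul c
      have h2' := (h1'.sqrt hcx).const_mul 2
      have h3' := (h2'.sub (hasDerivAt_id x)).sub_const 1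
      simpa using h3'
    have hden : HasDerivAt (fun r : ℝ => h0 * r + h1) h0 x := by
      simpa using ((hasDerivAt_id x).const_mul h0).add_const h1
    have hdne : h0 * x + h1 ≠ 0 := by
      have := mul_pos hh0 hx; intro h; linarith
    have := hnum.div hden hdne
    exact this
  have hderiv_val : ∀ x : ℝ, 0 < x →
      deriv (fun r => (2 * Real.sqrt (c * r) - r - 1) / (h0 * r + h1)) x
      = -((Real.sqrt x - sstar) * (h0 * s * (Real.sqrt x + sstar) + (h1 - h0)))
          / (Real.sqrt x * (h0 * x + h1) ^ 2) := by
    intro x hx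
    set t := Real.sqrt x with ht_def
    have ht0 : 0 < t := Real.sqrt_pos.mpr hx
    have ht2 : t ^ 2 = x := Real.sq_sqrt hx.le
    have hcx : Real.sqrt (c * x) = s * t := by
      rw [hs_def, ht_def]; exact Real.sqrt_mul hc0.le x
    have hdpos : (0:ℝ) < h0 * x + h1 := by have := mul_pos hh0 hx; linarith
    rw [(hderiv x hx).deriv, hcx, ← hQ t, ← ht2, ← hs2]
    have hsne : s ≠ 0 := ne_of_gt hs0
    have htne : t ≠ 0 := ne_of_gt ht0
    have hdne : h0 * t ^ 2 + h1 ≠ 0 := by rw [ht2]; exact ne_of_gt hdpos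
    field_simp
    ring
  have hpos : ∀ x ∈ Set.Ioo (1:ℝ) ropt,
      0 < deriv (fun r => (2 * Real.sqrt (c * r) - r - 1) / (h0 * r + h1)) x := by
    intro x hx
    have hx0 : 0 < x := lt_trans one_pos hx.1
    have ht0 : 0 < Real.sqrt x := Real.sqrt_pos.mpr hx0
    have ht2 : Real.sqrt x ^ 2 = x := Real.sq_sqrt hx0.le
    have hxlt : x < sstar ^ 2 := by rw [← hropt]; exact hx.2
    have htlt : Real.sqrt x < sstar := by nlinarith
    have hp := hfacpos (Real.sqrt x) ht0.le
    have hnegn : (Real.sqrt x - sstar) * (h0 * s * (Real.sqrt x + sstar) + (h1 - h0)) < 0 :=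
      mul_neg_of_neg_of_pos (by linarith) hp
    rw [hderiv_val x hx0]
    have hdpos : (0:ℝ) < Real.sqrt x * (h0 * x + h1) ^ 2 := by
      have := mul_pos hh0 hx0
      exact mul_pos ht0 (pow_pos (by linarith) 2)
    exact div_pos (neg_pos.mpr hnegn) hdpos
  have hnegd : ∀ x ∈ Set.Ioo ropt c,
      deriv (fun r => (2 * Real.sqrt (c * r) - r - 1) / (h0 * r + h1)) x < 0 := by
    intro x hx
    have hx0 : 0 < x := by nlinarith [hx.1]
    have ht0 : 0 < Real.sqrt x := Real.sqrt_pos.mpr hx0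
    have ht2 : Real.sqrt x ^ 2 = x := Real.sq_sqrt hx0.le
    have hxgt : sstar ^ 2 < x := by rw [← hropt]; exact hx.1
    have htgt : sstar < Real.sqrt x := by nlinarith
    have hp := hfacpos (Real.sqrt x) ht0.le
    have hposn : 0 < (Real.sqrt x - sstar) * (h0 * s * (Real.sqrt x + sstar) + (h1 - h0)) :=
      mul_pos (by linarith) hp
    rw [hderiv_val x hx0]
    have hdpos : (0:ℝ) < Real.sqrt x * (h0 * x + h1) ^ 2 := by
      have := mul_pos hh0 hx0
      exact mul_pos ht0 (pow_pos (by linarith) 2)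
    exact div_neg_of_neg_of_pos (by linarith) hdpos
  have hcont : ContinuousOn (fun r => (2 * Real.sqrt (c * r) - r - 1) / (h0 * r + h1))
      (Set.Ici (1:ℝ)) := by
    apply ContinuousOn.div
    · fun_prop
    · fun_prop
    · intro x hx
      have hx1 : (1:ℝ) ≤ x := hx
      have := mul_pos hh0 (lt_of_lt_of_le one_pos hx1)
      intro h; linarith
  have hmono : StrictMonoOn (fun r => (2 * Real.sqrt (c * r) - r - 1) / (h0 * r + h1))
      (Set.Icc 1 ropt) := by
    apply strictMonoOn_of_deriv_pos (convex_Icc 1 ropt)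
    · exact hcont.mono (fun x hx => hx.1)
    · intro x hx
      rw [interior_Icc] at hx
      exact hpos x hx
  have hanti : StrictAntiOn (fun r => (2 * Real.sqrt (c * r) - r - 1) / (h0 * r + h1))
      (Set.Icc ropt c) := by
    apply strictAntiOn_of_deriv_neg (convex_Icc ropt c)
    · exact hcont.mono (fun x hx => le_trans h1ropt hx.1)
    · intro x hx
      rw [interior_Icc] at hx
      exact hnegd x hx
  refine ⟨h1ropt, hroptc.le, ?_, ?_, hmono.mono Set.Ico_subset_Icc_self,
    hanti.mono Set.Ioc_subset_Icc_self⟩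
  · intro r hr
    rcases le_or_gt r ropt with h | h
    · exact hmono.monotoneOn ⟨hr.1, h⟩ ⟨h1ropt, le_refl _⟩ h
    · exact hanti.antitoneOn ⟨le_refl _, hroptc.le⟩ ⟨h.le, hr.2⟩ h.le
  · intro r hr heq
    by_contra hne
    rcases lt_or_gt_of_ne hne with h | h
    · exact absurd heq (ne_of_lt (hmono ⟨hr.1, h.le⟩ ⟨h1ropt, le_refl _⟩ h))
    · exact absurd heq (ne_of_lt (hanti ⟨le_refl _, hroptc.le⟩ ⟨h.le, hr.2⟩ h))
end

section
/- Define P_out(P, J) piecewise for fixed h > 0, σ² > 0, c > 1: P_out = 1 − (hP/(c−1))/(J(1+√(1+2σ²/J))+σ²) if hP/(c−1) ≤ (J/2)(1+√(1+2σ²/J))+σ², and P_out = (J/2)/(hP/(c−1)−σ²) otherwise. Then P_out is continuous in (P,J), strictly decreasing and convex in P for fixed J > 0, and strictly increasing and concave in J for fixed P with hP/(c−1) > σ². -/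
lemma auxA (J t s : ℝ) (hJ : 0 < J) (ht : 1 < t) (hst : s = (J*t^2 - J)/2) :
    1 - (J/2*(1+t)+s)/(J*(1+t)+s) = (J/2)/((J/2*(1+t)+s) - s) := by
  subst hst
  have h1 : J*(1+t) + (J*t^2 - J)/2 ≠ 0 := by nlinarith
  have h2 : (J/2*(1+t) + (J*t^2-J)/2) - (J*t^2-J)/2 = J/2*(1+t) := by ring
  rw [h2]
  have h3 : J/2*(1+t) ≠ 0 := by nlinarith
  rw [eq_div_iff h3]
  have h4 : J + J*t*2 + J*t^2 ≠ 0 := by nlinarith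
  field_simp
  have h5 : 2*(1+t)+(t^2-1) = (1+t)^2 := by ring
  have h6 : (1+t) ≠ 0 := by nlinarith
  rw [h5]
  field_simp
  ring

lemma auxB (J t s : ℝ) (hst : s = (J*t^2 - J)/2) :
    (J/2*(1+t))^2 = J/2*(J*(1+t)+s) := by
  subst hst; ring

lemma auxC (J t s : ℝ) (hJ : 0 < J) (ht : 1 < t) (hst : s = (J*t^2 - J)/2) :
    2*(J/2*(1+t))*(J/2*(1+t)+s)*((1+t) - s/(J*t)) = (J*(1+t)+s)^2 := by
  subst hst
  have h1 : J*t ≠ 0 := by positivity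
  field_simp
  ring


lemma t_gt (s J : ℝ) (hs : 0 < s) (hJ : 0 < J) : 1 < Real.sqrt (1+2*s/J) := by
  have h : (1:ℝ) < 1 + 2*s/J := by
    have : 0 < 2*s/J := by positivity
    linarith
  nlinarith [Real.sq_sqrt (by linarith : (0:ℝ) ≤ 1+2*s/J),
    Real.sqrt_nonneg (1+2*s/J)]

-- derivative of the sqrt factor
lemma hbt (s J : ℝ) (hs : 0 < s) (hJ : 0 < J) :
    HasDerivAt (fun J => Real.sqrt (1+2*s/J))
      (-(s/(J^2 * Real.sqrt (1+2*s/J)))) J := by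
  have hpos : (0:ℝ) < 1 + 2*s/J := by positivity
  have h0 : HasDerivAt (fun J : ℝ => J⁻¹) (-(J^2)⁻¹) J := hasDerivAt_inv hJ.ne'
  have h1 := (h0.const_mul (2*s)).const_add 1
  have h2 : (fun J : ℝ => 1 + 2*s*J⁻¹) = (fun J : ℝ => 1 + 2*s/J) := by
    funext J; rw [div_eq_mul_inv]
  rw [h2] at h1
  have h3 := h1.sqrt hpos.ne'
  convert h3 using 1
  have ht0 : Real.sqrt (1+2*s/J) ≠ 0 := by positivity
  field_simp

-- derivative of D J = J*(1+sqrt(1+2s/J)) + s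
lemma hbD (s J : ℝ) (hs : 0 < s) (hJ : 0 < J) :
    HasDerivAt (fun J => J*(1+Real.sqrt (1+2*s/J))+s)
      ((1+Real.sqrt (1+2*s/J)) - s/(J*Real.sqrt (1+2*s/J))) J := by
  have ht0 : (0:ℝ) < Real.sqrt (1+2*s/J) := Real.sqrt_pos.2 (by positivity)
  have h1 := ((hasDerivAt_id J).mul ((hbt s J hs hJ).const_add 1)).add_const s
  refine h1.congr_deriv ?_
  have := ht0.ne'
  simp only [id]
  field_simp
  ring

-- derivative of branch 1 in J
lemma hb1J (x s J : ℝ) (hs : 0 < s) (hJ : 0 < J) (hx : 0 < x) :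
    HasDerivAt (fun J => 1 - x/(J*(1+Real.sqrt (1+2*s/J))+s))
      (x*((1+Real.sqrt (1+2*s/J)) - s/(J*Real.sqrt (1+2*s/J)))
        /(J*(1+Real.sqrt (1+2*s/J))+s)^2) J := by
  have ht0 : (0:ℝ) < Real.sqrt (1+2*s/J) := Real.sqrt_pos.2 (by positivity)
  have hD0 : J*(1+Real.sqrt (1+2*s/J))+s ≠ 0 := by nlinarith
  have h1 := ((hasDerivAt_const J x).div (hbD s J hs hJ) hD0).const_sub 1
  refine h1.congr_deriv ?_
  ring

noncomputable def tt (s J : ℝ) : ℝ := Real.sqrt (1+2*s/J)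
noncomputable def DD (s J : ℝ) : ℝ := J*(1+tt s J)+s
noncomputable def GG (s J : ℝ) : ℝ := J/2*(1+tt s J)+s
noncomputable def ddp (s J : ℝ) : ℝ := (1+tt s J) - s/(J*tt s J)

lemma sqle (a b : ℝ) (ha : 0 ≤ a) (hb : 0 ≤ b) (h : a^2 ≤ b^2) : a ≤ b := by
  nlinarith [sq_nonneg (a-b), sq_nonneg (a+b)]

section facts
variable (s J : ℝ) (hs : 0 < s) (hJ : 0 < J)
include hs hJ

lemma tt_gt : 1 < tt s J := t_gt s J hs hJ

lemma htt : J*(tt s J)^2 = J + 2*s := by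
  rw [tt, Real.sq_sqrt (by positivity)]
  field_simp

lemma hst' : s = (J*(tt s J)^2 - J)/2 := by linarith [htt s J hs hJ]

lemma DD_pos : 0 < DD s J := by
  have := tt_gt s J hs hJ; rw [DD]; nlinarith

lemma GG_gt : s < GG s J := by
  have := tt_gt s J hs hJ; rw [GG]; nlinarith

lemma Jt_pos : 0 < J * tt s J := by
  have := tt_gt s J hs hJ; nlinarith

lemma Jt_sq : (J * tt s J)^2 = J*(J+2*s) := by
  have h := htt s J hs hJ
  linear_combination J * h

lemma ddp_pos : 0 < ddp s J := by
  have h1 := Jt_pos s J hs hJ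
  have h2 := htt s J hs hJ
  have h3 := tt_gt s J hs hJ
  rw [ddp, sub_pos, div_lt_iff₀ h1]
  nlinarith

end facts

section mono
variable (s J₁ J₂ : ℝ) (hs : 0 < s) (hJ₁ : 0 < J₁) (h12 : J₁ ≤ J₂)
include hs hJ₁ h12

lemma Jt_mono : J₁ * tt s J₁ ≤ J₂ * tt s J₂ := by
  have hJ₂ : 0 < J₂ := lt_of_lt_of_le hJ₁ h12
  refine sqle _ _ (Jt_pos s J₁ hs hJ₁).le (Jt_pos s J₂ hs hJ₂).le ?_
  rw [Jt_sq s J₁ hs hJ₁, Jt_sq s J₂ hs hJ₂]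
  nlinarith

lemma GG_mono : GG s J₁ ≤ GG s J₂ := by
  have h := Jt_mono s J₁ J₂ hs hJ₁ h12
  have h1 := tt_gt s J₁ hs hJ₁
  have h2 := tt_gt s J₂ hs (lt_of_lt_of_le hJ₁ h12)
  rw [GG, GG]
  nlinarith

lemma DD_mono : DD s J₁ ≤ DD s J₂ := by
  have h := Jt_mono s J₁ J₂ hs hJ₁ h12
  have h1 := tt_gt s J₁ hs hJ₁
  have h2 := tt_gt s J₂ hs (lt_of_lt_of_le hJ₁ h12)
  rw [DD, DD]
  nlinarith

lemma ddp_anti : ddp s J₂ ≤ ddp s J₁ := by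
  have hJ₂ : 0 < J₂ := lt_of_lt_of_le hJ₁ h12
  have p1 := Jt_pos s J₁ hs hJ₁
  have p2 := Jt_pos s J₂ hs hJ₂
  have e1 : tt s J₁ - s/(J₁*tt s J₁) = (J₁+s)/(J₁*tt s J₁) := by
    rw [eq_div_iff p1.ne', sub_mul, div_mul_cancel₀ _ p1.ne']
    linear_combination htt s J₁ hs hJ₁
  have e2 : tt s J₂ - s/(J₂*tt s J₂) = (J₂+s)/(J₂*tt s J₂) := by
    rw [eq_div_iff p2.ne', sub_mul, div_mul_cancel₀ _ p2.ne']
    linear_combination htt s J₂ hs hJ₂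
  have key : (J₂+s)/(J₂*tt s J₂) ≤ (J₁+s)/(J₁*tt s J₁) := by
    rw [div_le_div_iff₀ p2 p1]
    refine sqle _ _ (by nlinarith) (by nlinarith) ?_
    have sq1 : ((J₂+s)*(J₁*tt s J₁))^2 = (J₂+s)^2*(J₁*(J₁+2*s)) := by
      linear_combination (J₂+s)^2 * Jt_sq s J₁ hs hJ₁
    have sq2 : ((J₁+s)*(J₂*tt s J₂))^2 = (J₁+s)^2*(J₂*(J₂+2*s)) := by
      linear_combination (J₁+s)^2 * Jt_sq s J₂ hs hJ₂
    have idq : (J₁+s)^2*(J₂*(J₂+2*s)) - (J₂+s)^2*(J₁*(J₁+2*s))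
        = s^2*((J₂+s)^2-(J₁+s)^2) := by ring
    have hd2 : 0 ≤ s^2*((J₂+s)^2-(J₁+s)^2) :=
      mul_nonneg (sq_nonneg s) (by nlinarith)
    rw [sq1, sq2]
    linarith [idq, hd2]
  rw [ddp, ddp]
  have g1 : tt s J₂ - s/(J₂*tt s J₂) ≤ tt s J₁ - s/(J₁*tt s J₁) := by
    rw [e1, e2]; exact key
  linarith

end mono

-- junction identity for J-derivative
lemma junctionJ (x s J : ℝ) (hs : 0 < s) (hJ : 0 < J) (hxG : x = GG s J) :
    x * ddp s J / (DD s J)^2 = 1/(2*(x-s)) := by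
  have ht1 := tt_gt s J hs hJ
  have hC := auxC J (tt s J) s hJ ht1 (hst' s J hs hJ)
  have hxs : x - s = J/2*(1+tt s J) := by rw [hxG, GG]; ring
  have hxs0 : 0 < x - s := by nlinarith
  have hD := DD_pos s J hs hJ
  rw [div_eq_div_iff (pow_ne_zero 2 hD.ne') (by nlinarith : (2*(x-s)) ≠ 0)]
  rw [hxG]
  rw [GG, DD, ddp]
  linear_combination hC

-- mixed inequality used in antitone proof
lemma mixedJ (x s J : ℝ) (hs : 0 < s) (hJ : 0 < J) (hsx : s < x)
    (hxle : x ≤ GG s J) :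
    x * ddp s J / (DD s J)^2 ≤ 1/(2*(x-s)) := by
  have ht1 := tt_gt s J hs hJ
  have hC := auxC J (tt s J) s hJ ht1 (hst' s J hs hJ)
  have hGs := GG_gt s J hs hJ
  have hD := DD_pos s J hs hJ
  have hdp := ddp_pos s J hs hJ
  have hC2 : 2*((GG s J)-s)*(GG s J)*ddp s J = (DD s J)^2 := by
    rw [GG, DD, ddp]
    linear_combination hC
  have hmul : x*(x-s) ≤ (GG s J)*((GG s J)-s) := by nlinarith
  rw [div_le_div_iff₀ (pow_pos hD 2) (by nlinarith : (0:ℝ) < 2*(x-s))]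
  nlinarith [mul_le_mul_of_nonneg_right hmul hdp.le]


lemma hGc (s : ℝ) (hs : 0 < s) : ∀ J : ℝ, 0 < J → ContinuousAt (GG s) J := by
  intro J hJ
  have h1 : ContinuousAt (fun J => Real.sqrt (1+2*s/J)) J :=
    (hbt s J hs hJ).continuousAt
  have : ContinuousAt (fun J => J/2*(1+Real.sqrt (1+2*s/J))+s) J :=
    (((continuous_id.div_const 2).continuousAt).mul
      (continuousAt_const.add h1)).add continuousAt_const
  exact this.congr (by
    filter_upwards with J
    rw [GG, tt])

lemma hvals (x s J : ℝ) (hs : 0 < s) (hJ : 0 < J) (hxG : x = GG s J) :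
    1 - x/(DD s J) = J/2/(x-s) := by
  have h := auxA J (tt s J) s hJ (tt_gt s J hs hJ) (hst' s J hs hJ)
  rw [hxG]
  rw [GG, DD]
  have h2 : J/2*(1+tt s J)+s - s = J/2*(1+tt s J) := by ring
  calc 1 - (J/2*(1+tt s J)+s)/(J*(1+tt s J)+s)
      = (J/2)/((J/2*(1+tt s J)+s) - s) := h
    _ = J/2/(J/2*(1+tt s J)+s - s) := by rw [h2]

lemma Cont2D (k s : ℝ) (hk : 0 < k) (hs : 0 < s) :
    ContinuousOn (fun p : ℝ × ℝ => if k*p.1 ≤ GG s p.2 then 1 - k*p.1/(DD s p.2)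
      else p.2/2/(k*p.1-s)) (Set.Ioi (s/k) ×ˢ Set.Ioi 0) := by
  set S := Set.Ioi (s/k) ×ˢ Set.Ioi (0:ℝ) with hS
  have hmem : ∀ p : ℝ × ℝ, p ∈ S → s < k*p.1 ∧ 0 < p.2 := by
    intro p hp
    obtain ⟨h1, h2⟩ := hp
    rw [Set.mem_Ioi] at h1 h2
    constructor
    · rw [div_lt_iff₀ hk] at h1; linarith
    · exact h2
  -- continuity of the two branches on S
  have hcf : ContinuousOn (fun p : ℝ × ℝ => 1 - k*p.1/(DD s p.2)) S := by
    have hsqrt : ContinuousOn (fun p : ℝ × ℝ => Real.sqrt (1+2*s/p.2)) S := by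
      apply Real.continuous_sqrt.comp_continuousOn
      apply ContinuousOn.add continuousOn_const
      apply ContinuousOn.div continuousOn_const continuous_snd.continuousOn
      intro p hp
      exact (hmem p hp).2.ne'
    have hDD : ContinuousOn (fun p : ℝ × ℝ => DD s p.2) S := by
      simp only [DD, tt]
      exact (continuous_snd.continuousOn.mul
        (continuousOn_const.add hsqrt)).add continuousOn_const
    apply ContinuousOn.sub continuousOn_const
    apply ContinuousOn.div (continuous_fst.continuousOn.const_smul k) hDD
    intro p hp
    exact (DD_pos s p.2 hs (hmem p hp).2).ne'
  have hcg : ContinuousOn (fun p : ℝ × ℝ => p.2/2/(k*p.1-s)) S := by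
    apply ContinuousOn.div (continuous_snd.continuousOn.div_const 2)
      (((continuous_fst.const_smul k).sub continuous_const).continuousOn)
    intro p hp
    have := (hmem p hp).1
    intro h0
    simp only [Pi.sub_apply, Pi.smul_apply, smul_eq_mul] at h0
    linarith
  apply ContinuousOn.if
  · -- boundary equality
    intro a ⟨haS, hafr⟩
    obtain ⟨hsa, hJa⟩ := hmem a haS
    have hGconta : ContinuousAt (fun p : ℝ × ℝ => GG s p.2 - k*p.1) a := by
      exact ((hGc s hs a.2 hJa).comp continuous_snd.continuousAt).sub
        (continuous_fst.continuousAt.const_smul k)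
    have heq : k*a.1 = GG s a.2 := by
      rcases lt_trichotomy (k*a.1) (GG s a.2) with hlt | heq | hgt
      · exfalso
        have hpos : 0 < GG s a.2 - k*a.1 := by linarith
        have hnh : {p : ℝ × ℝ | k*p.1 ≤ GG s p.2} ∈ nhds a := by
          filter_upwards [hGconta.eventually (eventually_gt_nhds hpos)] with b hb
          show k*b.1 ≤ GG s b.2
          linarith [hb]
        have hint : a ∈ interior {p : ℝ × ℝ | k*p.1 ≤ GG s p.2} :=
          mem_interior_iff_mem_nhds.2 hnh
        rw [frontier_eq_closure_inter_closure, closure_compl] at hafr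
        exact hafr.2 hint
      · exact heq
      · exfalso
        have hneg : GG s a.2 - k*a.1 < 0 := by linarith
        have hnh : {p : ℝ × ℝ | ¬ (k*p.1 ≤ GG s p.2)} ∈ nhds a := by
          filter_upwards [hGconta.eventually (eventually_lt_nhds hneg)] with b hb
          show ¬ (k*b.1 ≤ GG s b.2)
          push_neg
          linarith [hb]
        have hint : a ∈ interior {p : ℝ × ℝ | k*p.1 ≤ GG s p.2}ᶜ :=
          mem_interior_iff_mem_nhds.2 hnh
        rw [interior_compl] at hint
        exact hint (frontier_subset_closure hafr)
    exact hvals (k*a.1) s a.2 hs hJa heq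
  · exact hcf.mono Set.inter_subset_left
  · exact hcg.mono Set.inter_subset_left

section Pdir
variable (k s J t : ℝ)

lemma Pdir (hk : 0 < k) (hs : 0 < s) (hJ : 0 < J) (ht : 1 < t)
    (hst : s = (J*t^2 - J)/2) :
    StrictAntiOn (fun P => if k*P ≤ J/2*(1+t)+s then 1 - k*P/(J*(1+t)+s)
        else J/2/(k*P-s)) (Set.Ioi (s/k)) ∧
      ConvexOn ℝ (Set.Ioi (s/k)) (fun P => if k*P ≤ J/2*(1+t)+s then
        1 - k*P/(J*(1+t)+s) else J/2/(k*P-s)) := by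
  set G := J/2*(1+t)+s with hG
  set D := J*(1+t)+s with hD
  have hDpos : 0 < D := by rw [hD]; nlinarith
  have hGs : s < G := by rw [hG]; nlinarith
  have hB : (G - s)^2 = J/2*D := by
    rw [hG, hD]
    have h2 : (J/2*(1+t)+s) - s = J/2*(1+t) := by ring
    rw [h2]; exact auxB J t s hst
  have hA : 1 - G/D = (J/2)/(G - s) := by rw [hG, hD]; exact auxA J t s hJ ht hst
  clear_value G D
  set F : ℝ → ℝ := fun P => if k*P ≤ G then 1 - k*P/D else J/2/(k*P-s) with hF
  set d : ℝ → ℝ := fun P => if k*P ≤ G then -(k/D) else -(k*(J/2)/(k*P-s)^2) with hd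
  clear_value F d
  have hb1 : ∀ P : ℝ, HasDerivAt (fun P => 1 - k*P/D) (-(k/D)) P := by
    intro P
    simpa using (((hasDerivAt_id P).const_mul k).div_const D).const_sub 1
  have hb2 : ∀ P : ℝ, s < k*P → HasDerivAt (fun P => J/2/(k*P-s))
      (-(k*(J/2)/(k*P-s)^2)) P := by
    intro P hP
    have hne : k*P - s ≠ 0 := by linarith
    have h1 : HasDerivAt (fun P : ℝ => k*P - s) k P := by
      simpa using ((hasDerivAt_id P).const_mul k).sub_const s
    have h2 := (hasDerivAt_const P (J/2)).div h1 hne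
    refine h2.congr_deriv ?_
    ring
  have hder : ∀ P ∈ Set.Ioi (s/k), HasDerivAt F (d P) P := by
    intro P hP
    have hsP : s < k*P := by
      rw [Set.mem_Ioi, div_lt_iff₀ hk] at hP; linarith [hP]
    rcases lt_trichotomy (k*P) G with hlt | heq | hgt
    · have hev : ∀ᶠ Q in nhds P, F Q = 1 - k*Q/D := by
        have hop : IsOpen {Q : ℝ | k*Q < G} :=
          isOpen_lt (by continuity) continuous_const
        filter_upwards [hop.mem_nhds hlt] with Q hQ
        rw [hF]; exact if_pos hQ.le
      have hdval : d P = -(k/D) := by rw [hd]; simp only [if_pos hlt.le]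
      rw [hdval]
      exact (hb1 P).congr_of_eventuallyEq hev
    · have hdval : d P = -(k/D) := by rw [hd]; simp only [if_pos heq.le]
      rw [hdval]
      have hFP : F P = 1 - k*P/D := by rw [hF]; simp only [if_pos heq.le]
      have hleft : HasDerivWithinAt F (-(k/D)) (Set.Iic P) P := by
        refine ((hb1 P).hasDerivWithinAt).congr ?_ hFP
        intro Q hQ
        have : k*Q ≤ G := by
          have := mul_le_mul_of_nonneg_left (Set.mem_Iic.1 hQ) hk.le
          linarith [this, heq]
        rw [hF]; exact if_pos this
      have hright : HasDerivWithinAt F (-(k/D)) (Set.Ici P) P := by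
        have hder2 := hb2 P hsP
        have heqd : -(k*(J/2)/(k*P-s)^2) = -(k/D) := by
          rw [heq, hB]
          have h1 : G - s ≠ 0 := by linarith
          have h2 : D ≠ 0 := ne_of_gt hDpos
          field_simp
        rw [← heqd]
        refine (hder2.hasDerivWithinAt).congr ?_ ?_
        · intro Q hQ
          rcases eq_or_lt_of_le (Set.mem_Ici.1 hQ) with rfl | hQgt
          · rw [hFP, heq, hA]
          · have : ¬ (k*Q ≤ G) := by
              push_neg
              rw [← heq]
              exact (mul_lt_mul_iff_right₀ hk).2 hQgt
            rw [hF]; exact if_neg this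
        · rw [hFP, heq, hA]
      have hu := hleft.union hright
      rw [Set.Iic_union_Ici] at hu
      exact hu.hasDerivAt (by simp)
    · have hnle : ¬ (k*P ≤ G) := not_le.2 hgt
      have hev : ∀ᶠ Q in nhds P, F Q = J/2/(k*Q-s) := by
        have hop : IsOpen {Q : ℝ | G < k*Q} :=
          isOpen_lt continuous_const (by continuity)
        filter_upwards [hop.mem_nhds hgt] with Q hQ
        rw [hF]; exact if_neg (not_le.2 hQ)
      have hdval : d P = -(k*(J/2)/(k*P-s)^2) := by rw [hd]; simp only [if_neg hnle]
      rw [hdval]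
      exact (hb2 P hsP).congr_of_eventuallyEq hev
  have hcont : ContinuousOn F (Set.Ioi (s/k)) := fun P hP =>
    (hder P hP).continuousAt.continuousWithinAt
  have hderiv : ∀ P ∈ Set.Ioi (s/k), deriv F P = d P := fun P hP =>
    (hder P hP).deriv
  have hneg : ∀ P ∈ Set.Ioi (s/k), d P < 0 := by
    intro P hP
    have hsP : s < k*P := by
      rw [Set.mem_Ioi, div_lt_iff₀ hk] at hP; linarith [hP]
    rw [hd]
    simp only []
    split_ifs with hc
    · have : 0 < k/D := div_pos hk hDpos
      linarith
    · have h1 : (0:ℝ) < k*P - s := by linarith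
      have : 0 < k*(J/2)/(k*P-s)^2 := by positivity
      linarith
  have hmono : MonotoneOn d (Set.Ioi (s/k)) := by
    intro P₁ hP₁ P₂ hP₂ h12
    have hs1 : s < k*P₁ := by
      rw [Set.mem_Ioi, div_lt_iff₀ hk] at hP₁; linarith [hP₁]
    have hs2 : s < k*P₂ := by
      rw [Set.mem_Ioi, div_lt_iff₀ hk] at hP₂; linarith [hP₂]
    have hkP : k*P₁ ≤ k*P₂ := mul_le_mul_of_nonneg_left h12 hk.le
    rw [hd]
    simp only []
    by_cases hc1 : k*P₁ ≤ G <;> by_cases hc2 : k*P₂ ≤ G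
    · simp only [if_pos hc1, if_pos hc2, le_refl]
    · simp only [if_pos hc1, if_neg hc2]
      push_neg at hc2
      have hA2 : 0 < k*P₂ - s := by linarith
      have hGA : (G - s)^2 ≤ (k*P₂ - s)^2 :=
        pow_le_pow_left₀ (by linarith) (by linarith) 2
      have key : k*(J/2)/(k*P₂-s)^2 ≤ k/D := by
        rw [div_le_div_iff₀ (by positivity) hDpos]
        have h3 : k*(J/2*D) ≤ k*(k*P₂-s)^2 := by
          rw [← hB]; exact mul_le_mul_of_nonneg_left hGA hk.le
        have h4 : k*(J/2)*D = k*(J/2*D) := by ring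
        linarith
      linarith
    · exact absurd (hkP.trans hc2) hc1
    · simp only [if_neg hc1, if_neg hc2]
      push_neg at hc1 hc2
      have hA1 : 0 < k*P₁ - s := by linarith
      have hA2 : 0 < k*P₂ - s := by linarith
      have key : k*(J/2)/(k*P₂-s)^2 ≤ k*(J/2)/(k*P₁-s)^2 := by
        apply div_le_div_of_nonneg_left (by positivity) (by positivity)
        exact pow_le_pow_left₀ hA1.le (by linarith) 2
      linarith
  constructor
  · exact strictAntiOn_of_deriv_neg (convex_Ioi _) hcont (fun P hP => by
      rw [interior_Ioi] at hP
      rw [hderiv P hP]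
      exact hneg P hP)
  · refine MonotoneOn.convexOn_of_deriv (convex_Ioi _) hcont ?_ ?_
    · intro P hP
      rw [interior_Ioi] at hP
      exact (hder P hP).differentiableAt.differentiableWithinAt
    · intro P₁ hP₁ P₂ hP₂ h12
      rw [interior_Ioi] at hP₁ hP₂
      rw [hderiv P₁ hP₁, hderiv P₂ hP₂]
      exact hmono hP₁ hP₂ h12

end Pdir

lemma Jdir (x s : ℝ) (hs : 0 < s) (hx : s < x) :
    StrictMonoOn (fun J => if x ≤ GG s J then 1 - x/(DD s J) else J/2/(x-s))
        (Set.Ioi 0) ∧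
      ConcaveOn ℝ (Set.Ioi 0)
        (fun J => if x ≤ GG s J then 1 - x/(DD s J) else J/2/(x-s)) := by
  have hx0 : 0 < x := lt_trans hs hx
  set F : ℝ → ℝ := fun J => if x ≤ GG s J then 1 - x/(DD s J) else J/2/(x-s)
    with hF
  set d : ℝ → ℝ := fun J => if x ≤ GG s J then x*(ddp s J)/(DD s J)^2
    else 1/(2*(x-s)) with hd
  clear_value F d
  -- branch derivatives
  have hb1 : ∀ J : ℝ, 0 < J → HasDerivAt (fun J => 1 - x/(DD s J))
      (x*(ddp s J)/(DD s J)^2) J := by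
    intro J hJ
    have := hb1J x s J hs hJ hx0
    simp only [DD, ddp, tt]
    exact this
  have hb2 : ∀ J : ℝ, HasDerivAt (fun J : ℝ => J/2/(x-s)) (1/(2*(x-s))) J := by
    intro J
    have h := ((hasDerivAt_id J).div_const 2).div_const (x-s)
    refine h.congr_deriv ?_
    rw [div_div]
  have hder : ∀ J ∈ Set.Ioi (0:ℝ), HasDerivAt F (d J) J := by
    intro J₀ hJ₀
    rw [Set.mem_Ioi] at hJ₀
    rcases lt_trichotomy x (GG s J₀) with hlt | heq | hgt
    · have hev : ∀ᶠ J in nhds J₀, F J = 1 - x/(DD s J) := by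
        filter_upwards [(hGc s hs J₀ hJ₀).eventually (eventually_gt_nhds hlt)] with J hJ
        rw [hF]; exact if_pos hJ.le
      have hdval : d J₀ = x*(ddp s J₀)/(DD s J₀)^2 := by
        rw [hd]; simp only [if_pos hlt.le]
      rw [hdval]
      exact (hb1 J₀ hJ₀).congr_of_eventuallyEq hev
    · have hxle : x ≤ GG s J₀ := le_of_eq heq
      have hdval : d J₀ = x*(ddp s J₀)/(DD s J₀)^2 := by
        rw [hd]; simp only [if_pos hxle]
      have hjct := junctionJ x s J₀ hs hJ₀ heq
      have hFJ₀ : F J₀ = J₀/2/(x-s) := by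
        rw [hF]
        simp only [if_pos hxle]
        exact hvals x s J₀ hs hJ₀ heq
      have hright : HasDerivWithinAt F (d J₀) (Set.Ici J₀) J₀ := by
        rw [hdval]
        refine ((hb1 J₀ hJ₀).hasDerivWithinAt).congr ?_ ?_
        · intro J hJ
          rw [Set.mem_Ici] at hJ
          have : x ≤ GG s J := heq.le.trans (GG_mono s J₀ J hs hJ₀ hJ)
          rw [hF]; exact if_pos this
        · rw [hF]; exact if_pos hxle
      have hleft : HasDerivWithinAt F (d J₀) (Set.Iic J₀ ∩ Set.Ioi 0) J₀ := by
        rw [hdval, hjct]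
        refine ((hb2 J₀).hasDerivWithinAt).congr ?_ ?_
        · intro J hJ
          obtain ⟨hJle, hJpos⟩ := hJ
          rw [Set.mem_Iic] at hJle
          rw [Set.mem_Ioi] at hJpos
          by_cases hc : x ≤ GG s J
          · have : GG s J ≤ GG s J₀ := GG_mono s J J₀ hs hJpos hJle
            have hxG : x = GG s J := le_antisymm hc (by rw [heq]; exact this)
            rw [hF]
            simp only [if_pos hc]
            exact hvals x s J hs hJpos hxG
          · rw [hF]; exact if_neg hc
        · exact hFJ₀
      have hu := hleft.union hright
      have hsub : Set.Ioi (0:ℝ) ⊆ (Set.Iic J₀ ∩ Set.Ioi 0) ∪ Set.Ici J₀ := by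
        intro J hJ
        by_cases hc : J ≤ J₀
        · exact Or.inl ⟨hc, hJ⟩
        · exact Or.inr (le_of_not_ge hc)
      exact (hu.mono hsub).hasDerivAt (isOpen_Ioi.mem_nhds hJ₀)
    · have hev : ∀ᶠ J in nhds J₀, F J = J/2/(x-s) := by
        filter_upwards [(hGc s hs J₀ hJ₀).eventually (eventually_lt_nhds hgt)] with J hJ
        rw [hF]; exact if_neg (not_le.2 hJ)
      have hdval : d J₀ = 1/(2*(x-s)) := by
        rw [hd]; simp only [if_neg (not_le.2 hgt)]
      rw [hdval]
      exact (hb2 J₀).congr_of_eventuallyEq hev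
  have hcont : ContinuousOn F (Set.Ioi 0) := fun J hJ =>
    (hder J hJ).continuousAt.continuousWithinAt
  have hderiv : ∀ J ∈ Set.Ioi (0:ℝ), deriv F J = d J := fun J hJ =>
    (hder J hJ).deriv
  have hpos : ∀ J ∈ Set.Ioi (0:ℝ), 0 < d J := by
    intro J hJ
    rw [Set.mem_Ioi] at hJ
    rw [hd]
    simp only []
    split_ifs with hc
    · exact div_pos (mul_pos hx0 (ddp_pos s J hs hJ)) (pow_pos (DD_pos s J hs hJ) 2)
    · have : (0:ℝ) < 2*(x-s) := by linarith
      positivity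
  have hanti : AntitoneOn d (Set.Ioi 0) := by
    intro J₁ hJ₁ J₂ hJ₂ h12
    rw [Set.mem_Ioi] at hJ₁ hJ₂
    rw [hd]
    simp only []
    by_cases hc1 : x ≤ GG s J₁ <;> by_cases hc2 : x ≤ GG s J₂
    · simp only [if_pos hc1, if_pos hc2]
      have hD1 := DD_pos s J₁ hs hJ₁
      have hD2 := DD_pos s J₂ hs hJ₂
      have hdp2 := ddp_pos s J₂ hs hJ₂
      have hdpa := ddp_anti s J₁ J₂ hs hJ₁ h12
      have hDm := DD_mono s J₁ J₂ hs hJ₁ h12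
      have hdp1 := ddp_pos s J₁ hs hJ₁
      have h1 : x*(ddp s J₂) ≤ x*(ddp s J₁) := mul_le_mul_of_nonneg_left hdpa hx0.le
      have h2 : (DD s J₁)^2 ≤ (DD s J₂)^2 := pow_le_pow_left₀ hD1.le hDm 2
      have step1 : x*(ddp s J₂)/(DD s J₂)^2 ≤ x*(ddp s J₁)/(DD s J₂)^2 :=
        (div_le_div_iff_of_pos_right (pow_pos hD2 2)).2 h1
      have step2 : x*(ddp s J₁)/(DD s J₂)^2 ≤ x*(ddp s J₁)/(DD s J₁)^2 :=
        div_le_div_of_nonneg_left (mul_pos hx0 hdp1).le (pow_pos hD1 2) h2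
      linarith
    · exact absurd (hc1.trans (GG_mono s J₁ J₂ hs hJ₁ h12)) hc2
    · simp only [if_neg hc1, if_pos hc2]
      exact mixedJ x s J₂ hs hJ₂ hx hc2
    · simp only [if_neg hc1, if_neg hc2, le_refl]
  constructor
  · exact strictMonoOn_of_deriv_pos (convex_Ioi _) hcont (fun J hJ => by
      rw [interior_Ioi] at hJ
      rw [hderiv J hJ]
      exact hpos J hJ)
  · refine AntitoneOn.concaveOn_of_deriv (convex_Ioi _) hcont ?_ ?_
    · intro J hJ
      rw [interior_Ioi] at hJ
      exact (hder J hJ).differentiableAt.differentiableWithinAt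
    · intro J₁ hJ₁ J₂ hJ₂ h12
      rw [interior_Ioi] at hJ₁ hJ₂
      rw [hderiv J₁ hJ₁, hderiv J₂ hJ₂]
      exact hanti hJ₁ hJ₂ h12
theorem stmt_7 (h s c : ℝ) (hh : 0 < h) (hs : 0 < s) (hc : 1 < c)
    (Pout : ℝ → ℝ → ℝ)
    (hPout : ∀ P J, Pout P J =
      if h * P / (c - 1) ≤ J / 2 * (1 + Real.sqrt (1 + 2 * s / J)) + s then
        1 - (h * P / (c - 1)) / (J * (1 + Real.sqrt (1 + 2 * s / J)) + s)
      else (J / 2) / (h * P / (c - 1) - s)) :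
    ContinuousOn (fun p : ℝ × ℝ => Pout p.1 p.2)
        (Set.Ioi ((c - 1) * s / h) ×ˢ Set.Ioi 0) ∧
      (∀ J > (0 : ℝ),
        StrictAntiOn (fun P => Pout P J) (Set.Ioi ((c - 1) * s / h)) ∧
          ConvexOn ℝ (Set.Ioi ((c - 1) * s / h)) (fun P => Pout P J)) ∧
      (∀ P : ℝ, s < h * P / (c - 1) →
        StrictMonoOn (fun J => Pout P J) (Set.Ioi 0) ∧
          ConcaveOn ℝ (Set.Ioi 0) (fun J => Pout P J)) := by
  have hc1 : 0 < c - 1 := by linarith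
  set k := h/(c-1) with hk_def
  have hk : 0 < k := by positivity
  have hkP : ∀ P : ℝ, h*P/(c-1) = k*P := fun P => by rw [hk_def]; ring
  have hdom : (c-1)*s/h = s/k := by
    rw [hk_def]
    field_simp
  refine ⟨?_, ?_, ?_⟩
  · -- continuity
    have hPF : (fun p : ℝ × ℝ => Pout p.1 p.2) =
        (fun p : ℝ × ℝ => if k*p.1 ≤ GG s p.2 then 1 - k*p.1/(DD s p.2)
          else p.2/2/(k*p.1-s)) := by
      funext p
      rw [hPout p.1 p.2, hkP p.1]
      simp only [GG, DD, tt]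
      exact if_congr Iff.rfl rfl rfl
    rw [hPF, hdom]
    exact Cont2D k s hk hs
  · -- P direction
    intro J hJ
    have ht := t_gt s J hs hJ
    have hst : s = (J*(Real.sqrt (1+2*s/J))^2 - J)/2 := by
      have := hst' s J hs hJ
      simpa only [tt] using this
    have hPF : (fun P => Pout P J) =
        (fun P => if k*P ≤ J/2*(1+Real.sqrt (1+2*s/J))+s then
          1 - k*P/(J*(1+Real.sqrt (1+2*s/J))+s) else J/2/(k*P-s)) := by
      funext P
      rw [hPout P J, hkP P]
    rw [hPF, hdom]
    exact Pdir k s J (Real.sqrt (1+2*s/J)) hk hs hJ ht hst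
  · -- J direction
    intro P hsP
    have hPF : (fun J => Pout P J) =
        (fun J => if h*P/(c-1) ≤ GG s J then 1 - (h*P/(c-1))/(DD s J)
          else J/2/(h*P/(c-1)-s)) := by
      funext J
      rw [hPout P J]
      simp only [GG, DD, tt]
      exact if_congr Iff.rfl rfl rfl
    rw [hPF]
    exact Jdir (h*P/(c-1)) s hs hsP
end

section
/- For fixed J > 0, the Case-1 partial derivative ∂P_out/∂P = −(h/(c−1))/(J(1+√(1+2σ²/J))+σ²) and the Case-2 partial derivative ∂P_out/∂P = −((c−1)/h)·J/(2(P−(c−1)σ²/h)²) coincide at the boundary point where hP/(c−1) = (J/2)(1+√(1+2σ²/J))+σ², so P_out is continuously differentiable in P across the case boundary. -/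
theorem stmt_8 (h s c P J : ℝ) (hh : 0 < h) (hs : 0 < s) (hc : 1 < c) (hJ : 0 < J)
    (hbdry : h * P / (c - 1) = J / 2 * (1 + Real.sqrt (1 + 2 * s / J)) + s) :
    -(h / (c - 1)) / (J * (1 + Real.sqrt (1 + 2 * s / J)) + s) =
      -((c - 1) / h) * J / (2 * (P - (c - 1) * s / h) ^ 2) := by
  set r := Real.sqrt (1 + 2 * s / J) with hrdef
  have hr0 : 0 ≤ r := Real.sqrt_nonneg _
  have hr2 : r ^ 2 = 1 + 2 * s / J := Real.sq_sqrt (by positivity)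
  have hc1 : (0:ℝ) < c - 1 := by linarith
  have hr2' : J * r ^ 2 = J + 2 * s := by
    field_simp at hr2; linarith
  have hP : P - (c - 1) * s / h = (c - 1) * J * (1 + r) / (2 * h) := by
    have := hbdry
    field_simp at this ⊢
    nlinarith [this]
  rw [hP]
  have hden : J * (1 + r) + s > 0 := by positivity
  field_simp
  linear_combination (-1) * hr2'
end

section
/- Solving jointly the KKT stationarity conditions −(h/(c−1))/(J(1+√(1+2σ²/J))+σ²) + λ = 0 and −(h/(c−1))·P/((J(1+√(1+2σ²/J))+σ²)·J√(1+2σ²/J)) + μ = 0 with λ, μ > 0 yields P = (μ/λ)·J·√(1+2σ²/J) and J = √((λ/μ)²P² + σ⁴) − σ², for P, J > 0. -/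
theorem stmt_10 (h s c lam mu P J : ℝ) (hh : 0 < h) (hs : 0 < s) (hc : 1 < c)
    (hlam : 0 < lam) (hmu : 0 < mu) (hP : 0 < P) (hJ : 0 < J)
    (hKKT1 : -(h / (c - 1)) / (J * (1 + Real.sqrt (1 + 2 * s / J)) + s) + lam = 0)
    (hKKT2 : -(h / (c - 1)) / (J * (1 + Real.sqrt (1 + 2 * s / J)) + s) *
        (P / (J * Real.sqrt (1 + 2 * s / J))) + mu = 0) :
    P = (mu / lam) * J * Real.sqrt (1 + 2 * s / J) ∧
      J = Real.sqrt ((lam / mu) ^ 2 * P ^ 2 + s ^ 2) - s := by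
  set r := Real.sqrt (1 + 2 * s / J) with hr
  have harg : (0:ℝ) < 1 + 2 * s / J := by positivity
  have hrpos : 0 < r := Real.sqrt_pos.mpr harg
  have hrsq : r ^ 2 = 1 + 2 * s / J := Real.sq_sqrt harg.le
  -- from hKKT2 - (hKKT1 scaled):
  have hmu_eq : mu = lam * (P / (J * r)) := by
    have h1 : -(h / (c - 1)) / (J * (1 + r) + s) = -lam := by linarith
    rw [h1] at hKKT2
    linarith
  have hP_eq : P = (mu / lam) * J * r := by
    field_simp [hlam.ne'] at hmu_eq ⊢
    linarith [hmu_eq]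
  refine ⟨hP_eq, ?_⟩
  have hkey : (lam / mu) ^ 2 * P ^ 2 + s ^ 2 = (J + s) ^ 2 := by
    have : (lam / mu) * P = J * r := by
      rw [hP_eq]; field_simp
    have h2 : (lam / mu) ^ 2 * P ^ 2 = (J * r) ^ 2 := by
      rw [← this]; ring
    rw [h2]
    have : (J * r) ^ 2 = J ^ 2 * (1 + 2 * s / J) := by rw [mul_pow, hrsq]
    rw [this]; field_simp; ring
  rw [hkey, Real.sqrt_sq (by positivity)]
  ring
end

section
/- The first-level power allocations P_M(h) and J_M(h) defined piecewise—zero for h ≤ h_{0/1} = λ(c−1)σ², equal to (h/(c−1))·μ/(2λ²) − μ(c−1)σ²/(2h) and √((λ/μ)²P_M(h)² + σ⁴) − σ² respectively for h_{0/1} < h ≤ h_{1/2} = λ(c−1)(1/μ + σ²), and equal to ((c−1)/h)(1/(2μ)+σ²) and ((c−1)/h)·λ/(2μ²) respectively for h > h_{1/2}—are continuous functions of h on (0,∞), increasing on (h_{0/1}, h_{1/2}] and decreasing on (h_{1/2}, ∞). -/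
theorem stmt_12 (lam mu s c : ℝ) (hlam : 0 < lam) (hmu : 0 < mu) (hs : 0 < s) (hc : 1 < c)
    (PM JM : ℝ → ℝ)
    (hPM : ∀ h : ℝ, PM h =
      if h ≤ lam * (c - 1) * s then 0
      else if h ≤ lam * (c - 1) * (1 / mu + s) then
        (h / (c - 1)) * (mu / (2 * lam ^ 2)) - mu * (c - 1) * s ^ 2 / (2 * h)
      else ((c - 1) / h) * (1 / (2 * mu) + s))
    (hJM : ∀ h : ℝ, JM h =
      if h ≤ lam * (c - 1) * s then 0
      else if h ≤ lam * (c - 1) * (1 / mu + s) then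
        Real.sqrt ((lam / mu) ^ 2 * (PM h) ^ 2 + s ^ 2) - s
      else ((c - 1) / h) * (lam / (2 * mu ^ 2))) :
    ContinuousOn PM (Set.Ioi 0) ∧ ContinuousOn JM (Set.Ioi 0) ∧
      MonotoneOn PM (Set.Ioc (lam * (c - 1) * s) (lam * (c - 1) * (1 / mu + s))) ∧
      MonotoneOn JM (Set.Ioc (lam * (c - 1) * s) (lam * (c - 1) * (1 / mu + s))) ∧
      AntitoneOn PM (Set.Ioi (lam * (c - 1) * (1 / mu + s))) ∧
      AntitoneOn JM (Set.Ioi (lam * (c - 1) * (1 / mu + s))) := by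
  have hc1 : (0:ℝ) < c - 1 := by linarith
  set a := lam * (c - 1) * s with ha_def
  set b := lam * (c - 1) * (1 / mu + s) with hb_def
  have hA : 0 < lam * (c - 1) := mul_pos hlam hc1
  have ha : 0 < a := mul_pos hA hs
  have hb : 0 < b := mul_pos hA (by positivity)
  have hab : a < b := by
    rw [ha_def, hb_def]
    have h1 : 0 < 1 / mu := by positivity
    nlinarith
  -- monotonicity of the middle branch
  have hf2mono : ∀ x y : ℝ, 0 < x → x ≤ y →
      (x / (c - 1)) * (mu / (2 * lam ^ 2)) - mu * (c - 1) * s ^ 2 / (2 * x) ≤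
      (y / (c - 1)) * (mu / (2 * lam ^ 2)) - mu * (c - 1) * s ^ 2 / (2 * y) := by
    intro x y hx hxy
    have hy : 0 < y := hx.trans_le hxy
    have h1 : (x / (c - 1)) * (mu / (2 * lam ^ 2)) ≤ (y / (c - 1)) * (mu / (2 * lam ^ 2)) := by
      apply mul_le_mul_of_nonneg_right _ (by positivity)
      exact (div_le_div_iff_of_pos_right hc1).mpr hxy
    have hnn : 0 < mu * (c - 1) * s ^ 2 := by positivity
    have h2 : mu * (c - 1) * s ^ 2 / (2 * y) ≤ mu * (c - 1) * s ^ 2 / (2 * x) :=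
      div_le_div_of_nonneg_left hnn.le (by positivity) (by linarith)
    linarith
  -- antitonicity of C/h * K
  have hf3anti : ∀ (K x y : ℝ), 0 ≤ K → 0 < x → x ≤ y → ((c - 1) / y) * K ≤ ((c - 1) / x) * K := by
    intro K x y hK hx hxy
    apply mul_le_mul_of_nonneg_right _ hK
    exact div_le_div_of_nonneg_left hc1.le hx hxy
  -- boundary values
  have hf2a : (a / (c - 1)) * (mu / (2 * lam ^ 2)) - mu * (c - 1) * s ^ 2 / (2 * a) = 0 := by
    rw [ha_def]; field_simp; ring
  have hf2b : (b / (c - 1)) * (mu / (2 * lam ^ 2)) - mu * (c - 1) * s ^ 2 / (2 * b)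
      = ((c - 1) / b) * (1 / (2 * mu) + s) := by
    rw [hb_def]; field_simp; ring
  have hkey : (lam / mu) ^ 2 * (((c - 1) / b) * (1 / (2 * mu) + s)) ^ 2 + s ^ 2
      = (((c - 1) / b) * (lam / (2 * mu ^ 2)) + s) ^ 2 := by
    rw [hb_def]; field_simp; ring
  have hg3bpos : 0 ≤ ((c - 1) / b) * (lam / (2 * mu ^ 2)) + s := by
    have h1 : 0 < (c - 1) / b := div_pos hc1 hb
    have h2 : 0 < lam / (2 * mu ^ 2) := by positivity
    nlinarith
  have hsqrtb : Real.sqrt ((lam / mu) ^ 2 *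
      ((b / (c - 1)) * (mu / (2 * lam ^ 2)) - mu * (c - 1) * s ^ 2 / (2 * b)) ^ 2 + s ^ 2)
      = ((c - 1) / b) * (lam / (2 * mu ^ 2)) + s := by
    rw [hf2b, hkey, Real.sqrt_sq hg3bpos]
  -- nonnegativity of middle branch above a
  have hf2nonneg : ∀ h : ℝ, a ≤ h →
      0 ≤ (h / (c - 1)) * (mu / (2 * lam ^ 2)) - mu * (c - 1) * s ^ 2 / (2 * h) := by
    intro h hh
    have := hf2mono a h ha hh
    linarith
  -- middle branch ≤ right branch on (0, b]
  have hle : ∀ h : ℝ, 0 < h → h ≤ b →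
      (h / (c - 1)) * (mu / (2 * lam ^ 2)) - mu * (c - 1) * s ^ 2 / (2 * h) ≤
      ((c - 1) / h) * (1 / (2 * mu) + s) := by
    intro h hh hhb
    have h1 := hf2mono h b hh hhb
    have h2 : ((c - 1) / b) * (1 / (2 * mu) + s) ≤ ((c - 1) / h) * (1 / (2 * mu) + s) :=
      hf3anti _ h b (by positivity) hh hhb
    linarith
  have hge : ∀ h : ℝ, b ≤ h →
      ((c - 1) / h) * (1 / (2 * mu) + s) ≤
      (h / (c - 1)) * (mu / (2 * lam ^ 2)) - mu * (c - 1) * s ^ 2 / (2 * h) := by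
    intro h hh
    have h1 := hf2mono b h hb hh
    have h2 : ((c - 1) / h) * (1 / (2 * mu) + s) ≤ ((c - 1) / b) * (1 / (2 * mu) + s) :=
      hf3anti _ b h (by positivity) hb hh
    linarith
  -- closed form for PM
  have hPMeq : Set.EqOn PM (fun h : ℝ => min
      (max ((h / (c - 1)) * (mu / (2 * lam ^ 2)) - mu * (c - 1) * s ^ 2 / (2 * h)) 0)
      (((c - 1) / h) * (1 / (2 * mu) + s))) (Set.Ioi 0) := by
    intro h hh
    simp only [Set.mem_Ioi] at hh
    dsimp only
    rw [hPM h]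
    by_cases h1 : h ≤ a
    · rw [if_pos h1]
      have e1 : (h / (c - 1)) * (mu / (2 * lam ^ 2)) - mu * (c - 1) * s ^ 2 / (2 * h) ≤ 0 := by
        have := hf2mono h a hh h1; linarith
      have e2 : (0:ℝ) ≤ ((c - 1) / h) * (1 / (2 * mu) + s) :=
        (mul_pos (div_pos hc1 hh) (by positivity)).le
      rw [max_eq_right e1, min_eq_left e2]
    · rw [if_neg h1]; push_neg at h1
      by_cases h2 : h ≤ b
      · rw [if_pos h2, max_eq_left (hf2nonneg h h1.le), min_eq_left (hle h hh h2)]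
      · rw [if_neg h2]; push_neg at h2
        rw [max_eq_left (hf2nonneg h (hab.le.trans h2.le)), min_eq_right (hge h h2.le)]
  -- closed form for JM
  have hJMeq : Set.EqOn JM (fun h : ℝ => min
      (Real.sqrt ((lam / mu) ^ 2 *
        (max ((h / (c - 1)) * (mu / (2 * lam ^ 2)) - mu * (c - 1) * s ^ 2 / (2 * h)) 0) ^ 2
        + s ^ 2) - s)
      (((c - 1) / h) * (lam / (2 * mu ^ 2)))) (Set.Ioi 0) := by
    intro h hh
    simp only [Set.mem_Ioi] at hh
    dsimp only
    rw [hJM h]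
    by_cases h1 : h ≤ a
    · rw [if_pos h1]
      have e1 : max ((h / (c - 1)) * (mu / (2 * lam ^ 2)) - mu * (c - 1) * s ^ 2 / (2 * h)) 0 = 0 :=
        max_eq_right (by have := hf2mono h a hh h1; linarith)
      rw [e1]
      have e3 : (lam / mu) ^ 2 * (0:ℝ) ^ 2 + s ^ 2 = s ^ 2 := by ring
      rw [e3, Real.sqrt_sq hs.le, sub_self]
      have e2 : (0:ℝ) ≤ ((c - 1) / h) * (lam / (2 * mu ^ 2)) :=
        (mul_pos (div_pos hc1 hh) (by positivity)).le
      rw [min_eq_left e2]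
    · rw [if_neg h1]; push_neg at h1
      by_cases h2 : h ≤ b
      · rw [if_pos h2]
        have hPMh : PM h = (h / (c - 1)) * (mu / (2 * lam ^ 2)) - mu * (c - 1) * s ^ 2 / (2 * h) := by
          rw [hPM h, if_neg (not_le.mpr h1), if_pos h2]
        rw [hPMh, max_eq_left (hf2nonneg h h1.le)]
        have e1 := hf2nonneg h h1.le
        have hm := hf2mono h b hh h2
        have hsq : ((h / (c - 1)) * (mu / (2 * lam ^ 2)) - mu * (c - 1) * s ^ 2 / (2 * h)) ^ 2 ≤
            ((b / (c - 1)) * (mu / (2 * lam ^ 2)) - mu * (c - 1) * s ^ 2 / (2 * b)) ^ 2 :=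
          pow_le_pow_left₀ e1 hm 2
        have step1 : Real.sqrt ((lam / mu) ^ 2 *
            ((h / (c - 1)) * (mu / (2 * lam ^ 2)) - mu * (c - 1) * s ^ 2 / (2 * h)) ^ 2 + s ^ 2) ≤
            Real.sqrt ((lam / mu) ^ 2 *
            ((b / (c - 1)) * (mu / (2 * lam ^ 2)) - mu * (c - 1) * s ^ 2 / (2 * b)) ^ 2 + s ^ 2) := by
          exact Real.sqrt_le_sqrt (add_le_add_left (mul_le_mul_of_nonneg_left hsq (sq_nonneg _)) _)
        have step3 : ((c - 1) / b) * (lam / (2 * mu ^ 2)) ≤ ((c - 1) / h) * (lam / (2 * mu ^ 2)) :=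
          hf3anti _ h b (by positivity) hh h2
        rw [min_eq_left (by rw [hsqrtb] at step1; linarith)]
      · rw [if_neg h2]; push_neg at h2
        have e1 := hf2nonneg h (hab.le.trans h2.le)
        rw [max_eq_left e1]
        have e1b := hf2nonneg b hab.le
        have hm := hf2mono b h hb h2.le
        have hsq : ((b / (c - 1)) * (mu / (2 * lam ^ 2)) - mu * (c - 1) * s ^ 2 / (2 * b)) ^ 2 ≤
            ((h / (c - 1)) * (mu / (2 * lam ^ 2)) - mu * (c - 1) * s ^ 2 / (2 * h)) ^ 2 :=
          pow_le_pow_left₀ e1b hm 2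
        have step1 : Real.sqrt ((lam / mu) ^ 2 *
            ((b / (c - 1)) * (mu / (2 * lam ^ 2)) - mu * (c - 1) * s ^ 2 / (2 * b)) ^ 2 + s ^ 2) ≤
            Real.sqrt ((lam / mu) ^ 2 *
            ((h / (c - 1)) * (mu / (2 * lam ^ 2)) - mu * (c - 1) * s ^ 2 / (2 * h)) ^ 2 + s ^ 2) := by
          exact Real.sqrt_le_sqrt (add_le_add_left (mul_le_mul_of_nonneg_left hsq (sq_nonneg _)) _)
        have step3 : ((c - 1) / h) * (lam / (2 * mu ^ 2)) ≤ ((c - 1) / b) * (lam / (2 * mu ^ 2)) :=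
          hf3anti _ b h (by positivity) hb h2.le
        rw [min_eq_right (by rw [hsqrtb] at step1; linarith)]
  -- continuity of the closed forms
  have hne : ∀ x ∈ Set.Ioi (0:ℝ), x ≠ 0 := fun x hx => ne_of_gt hx
  have hf2cont : ContinuousOn (fun h : ℝ =>
      (h / (c - 1)) * (mu / (2 * lam ^ 2)) - mu * (c - 1) * s ^ 2 / (2 * h)) (Set.Ioi 0) := by
    apply ContinuousOn.sub
    · exact (continuousOn_id.div_const _).mul continuousOn_const
    · exact continuousOn_const.div (continuousOn_const.mul continuousOn_id)
        (fun x hx => by simp only [Set.mem_Ioi] at hx; positivity)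
  have hf3cont : ContinuousOn (fun h : ℝ => ((c - 1) / h) * (1 / (2 * mu) + s)) (Set.Ioi 0) :=
    (continuousOn_const.div continuousOn_id hne).mul continuousOn_const
  have hg3cont : ContinuousOn (fun h : ℝ => ((c - 1) / h) * (lam / (2 * mu ^ 2))) (Set.Ioi 0) :=
    (continuousOn_const.div continuousOn_id hne).mul continuousOn_const
  have hPMcont : ContinuousOn (fun h : ℝ => min
      (max ((h / (c - 1)) * (mu / (2 * lam ^ 2)) - mu * (c - 1) * s ^ 2 / (2 * h)) 0)
      (((c - 1) / h) * (1 / (2 * mu) + s))) (Set.Ioi 0) :=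
    (hf2cont.sup continuousOn_const).inf hf3cont
  have hJMcont : ContinuousOn (fun h : ℝ => min
      (Real.sqrt ((lam / mu) ^ 2 *
        (max ((h / (c - 1)) * (mu / (2 * lam ^ 2)) - mu * (c - 1) * s ^ 2 / (2 * h)) 0) ^ 2
        + s ^ 2) - s)
      (((c - 1) / h) * (lam / (2 * mu ^ 2)))) (Set.Ioi 0) := by
    apply ContinuousOn.inf _ hg3cont
    apply ContinuousOn.sub _ continuousOn_const
    apply Real.continuous_sqrt.comp_continuousOn
    exact (continuousOn_const.mul ((hf2cont.sup continuousOn_const).pow 2)).add continuousOn_const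
  refine ⟨hPMcont.congr hPMeq, hJMcont.congr hJMeq, ?_, ?_, ?_, ?_⟩
  · intro x hx y hy hxy
    rw [hPM x, if_neg (not_le.mpr hx.1), if_pos hx.2,
        hPM y, if_neg (not_le.mpr hy.1), if_pos hy.2]
    exact hf2mono x y (ha.trans hx.1) hxy
  · intro x hx y hy hxy
    have hPx : PM x = (x / (c - 1)) * (mu / (2 * lam ^ 2)) - mu * (c - 1) * s ^ 2 / (2 * x) := by
      rw [hPM x, if_neg (not_le.mpr hx.1), if_pos hx.2]
    have hPy : PM y = (y / (c - 1)) * (mu / (2 * lam ^ 2)) - mu * (c - 1) * s ^ 2 / (2 * y) := by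
      rw [hPM y, if_neg (not_le.mpr hy.1), if_pos hy.2]
    rw [hJM x, if_neg (not_le.mpr hx.1), if_pos hx.2,
        hJM y, if_neg (not_le.mpr hy.1), if_pos hy.2, hPx, hPy]
    have e1 := hf2nonneg x hx.1.le
    have hm := hf2mono x y (ha.trans hx.1) hxy
    have hsq : ((x / (c - 1)) * (mu / (2 * lam ^ 2)) - mu * (c - 1) * s ^ 2 / (2 * x)) ^ 2 ≤
        ((y / (c - 1)) * (mu / (2 * lam ^ 2)) - mu * (c - 1) * s ^ 2 / (2 * y)) ^ 2 :=
      pow_le_pow_left₀ e1 hm 2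
    have := Real.sqrt_le_sqrt (show (lam / mu) ^ 2 *
        ((x / (c - 1)) * (mu / (2 * lam ^ 2)) - mu * (c - 1) * s ^ 2 / (2 * x)) ^ 2 + s ^ 2 ≤
        (lam / mu) ^ 2 *
        ((y / (c - 1)) * (mu / (2 * lam ^ 2)) - mu * (c - 1) * s ^ 2 / (2 * y)) ^ 2 + s ^ 2 from
      add_le_add_left (mul_le_mul_of_nonneg_left hsq (sq_nonneg _)) _)
    linarith
  · intro x hx y hy hxy
    simp only [Set.mem_Ioi] at hx hy
    rw [hPM x, if_neg (not_le.mpr (hab.trans hx)), if_neg (not_le.mpr hx),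
        hPM y, if_neg (not_le.mpr (hab.trans hy)), if_neg (not_le.mpr hy)]
    exact hf3anti _ x y (by positivity) (hb.trans hx) hxy
  · intro x hx y hy hxy
    simp only [Set.mem_Ioi] at hx hy
    rw [hJM x, if_neg (not_le.mpr (hab.trans hx)), if_neg (not_le.mpr hx),
        hJM y, if_neg (not_le.mpr (hab.trans hy)), if_neg (not_le.mpr hy)]
    exact hf3anti _ x y (by positivity) (hb.trans hx) hxy
end

section
/- If 0 < h₀ ≤ h₁, σ² > 0, c > 1, J ≥ 0, and c(2J+σ²)/h₁ < σ²/h₀, then in the two-block problem with all jamming power on block 1 (x₀ = σ², x₁ = 2J+σ²), the power-minimizing transmitter strategy achieving sum mutual information log c puts all power on block 0: i.e., the water level λ = √(c·(x₀/h₀)(x₁/h₁)) satisfies λ < x₀/h₀, so the water-filling solution assigns P₁ = 0 and P₀ determined by log(1 + h₀P₀/σ²) = log c. -/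
theorem stmt_17 (h0 h1 s c J : ℝ)
    (hh0 : 0 < h0) (hle : h0 ≤ h1) (hs : 0 < s) (hc : 1 < c) (hJ : 0 ≤ J)
    (x0 x1 lam P0 : ℝ)
    (hx0 : x0 = s) (hx1 : x1 = 2 * J + s)
    (hlam : lam = Real.sqrt (c * (x0 / h0) * (x1 / h1)))
    (hP0 : P0 = (c - 1) * s / h0)
    (hcond : c * (2 * J + s) / h1 < s / h0) :
    lam < x0 / h0 ∧
      Real.log (1 + h0 * P0 / s) = Real.log c ∧
      Real.log (1 + h0 * P0 / x0) + Real.log (1 + h1 * 0 / x1) = Real.log c := by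
  have hh1 : 0 < h1 := lt_of_lt_of_le hh0 hle
  have hpos : 0 < s / h0 := div_pos hs hh0
  have key : lam < x0 / h0 := by
    rw [hlam, hx0, hx1]
    have h1' : c * (x1 / h1) < s / h0 := by
      rw [hx1]; rw [mul_div_assoc] at hcond; exact hcond
    rw [hx1] at h1'
    have harg : c * (s / h0) * ((2 * J + s) / h1) < (s / h0) * (s / h0) := by
      calc c * (s / h0) * ((2 * J + s) / h1)
          = (c * ((2 * J + s) / h1)) * (s / h0) := by ring
        _ < (s / h0) * (s / h0) := by
            exact mul_lt_mul_of_pos_right h1' hpos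
    calc Real.sqrt (c * (s / h0) * ((2 * J + s) / h1))
        < Real.sqrt ((s / h0) * (s / h0)) := by
          apply Real.sqrt_lt_sqrt _ harg
          positivity
      _ = s / h0 := by
          exact Real.sqrt_mul_self hpos.le
  refine ⟨key, ?_, ?_⟩
  · have : 1 + h0 * P0 / s = c := by
      rw [hP0]; field_simp; ring
    rw [this]
  · have h2 : 1 + h0 * P0 / x0 = c := by
      rw [hP0, hx0]; field_simp; ring
    rw [h2]
    simp
end
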